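/- arXiv:1507.05533 — 2 statements merged into one kernel-verified Lean document; each statement's English description precedes it below -/
import Mathlib

section
/- Suppose S, D, Y_1,...,Y_Γ are random variables over a finite alphabet of size q, entropies measured in base q, such that: (i) H(S | Y_1,...,Y_Γ) = H(S) (strong security), (ii) H(S | D) = 0 (perfect reconstruction), (iii) H(D) ≤ M, (iv) H(Y_1,...,Y_Γ) ≥ Γ, and (v) H(Y_1,...,Y_Γ | D, S) = 0. Then H(S) ≤ M − Γ. -/
open Finset

/-- Probability that the random variable `X` on the finite weighted space `(Ω, μ)`
takes the value `a`. -/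
noncomputable def pr {Ω α : Type*} [Fintype Ω] [DecidableEq α]
    (μ : Ω → ℝ) (X : Ω → α) (a : α) : ℝ :=
  ∑ ω ∈ Finset.univ.filter (fun ω => X ω = a), μ ω

/-- Base-`q` Shannon entropy of the random variable `X`. -/
noncomputable def ent {Ω α : Type*} [Fintype Ω] [Fintype α] [DecidableEq α]
    (q : ℝ) (μ : Ω → ℝ) (X : Ω → α) : ℝ :=
  -∑ a, pr μ X a * Real.logb q (pr μ X a)

/-- Conditional entropy `H(X | Y) = H(X, Y) - H(Y)` (base `q`). -/
noncomputable def condEnt {Ω α β : Type*} [Fintype Ω] [Fintype α] [Fintype β]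
    [DecidableEq α] [DecidableEq β] (q : ℝ) (μ : Ω → ℝ) (X : Ω → α) (Y : Ω → β) : ℝ :=
  ent q μ (fun ω => (X ω, Y ω)) - ent q μ Y

/-- Mutual information `I(X ; Y) = H(X) - H(X | Y)` (base `q`). -/
noncomputable def mutInfo {Ω α β : Type*} [Fintype Ω] [Fintype α] [Fintype β]
    [DecidableEq α] [DecidableEq β] (q : ℝ) (μ : Ω → ℝ) (X : Ω → α) (Y : Ω → β) : ℝ :=
  ent q μ X - condEnt q μ X Y


lemma pr_nonneg {Ω α : Type*} [Fintype Ω] [DecidableEq α]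
    (μ : Ω → ℝ) (hμ0 : ∀ ω, 0 ≤ μ ω) (X : Ω → α) (a : α) : 0 ≤ pr μ X a :=
  Finset.sum_nonneg fun ω _ => hμ0 ω

lemma pr_comp {Ω α β : Type*} [Fintype Ω] [Fintype α] [DecidableEq α] [DecidableEq β]
    (μ : Ω → ℝ) (X : Ω → α) (g : α → β) (b : β) :
    pr μ (fun ω => g (X ω)) b = ∑ a ∈ Finset.univ.filter (fun a => g a = b), pr μ X a := by
  unfold pr
  simp only [Finset.sum_filter]
  calc ∑ ω, (if g (X ω) = b then μ ω else 0)
      = ∑ ω, ∑ a, (if g a = b then (if X ω = a then μ ω else 0) else 0) := by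
        refine Finset.sum_congr rfl fun ω _ => ?_
        rw [Finset.sum_eq_single (X ω)]
        · simp
        · intro a _ ha; simp [Ne.symm ha]
        · simp
    _ = _ := by
        rw [Finset.sum_comm]
        refine Finset.sum_congr rfl fun a _ => ?_
        by_cases h : g a = b <;> simp [h]

lemma ent_comp_le {Ω α β : Type*} [Fintype Ω] [Fintype α] [Fintype β]
    [DecidableEq α] [DecidableEq β]
    {q : ℝ} (hq : 1 < q) {μ : Ω → ℝ} (hμ0 : ∀ ω, 0 ≤ μ ω) (X : Ω → α) (g : α → β) :
    ent q μ (fun ω => g (X ω)) ≤ ent q μ X := by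
  unfold ent
  rw [neg_le_neg_iff]
  calc ∑ a, pr μ X a * Real.logb q (pr μ X a)
      = ∑ b, ∑ a ∈ Finset.univ.filter (fun a => g a = b),
          pr μ X a * Real.logb q (pr μ X a) := (Finset.sum_fiberwise _ g _).symm
    _ ≤ ∑ b, pr μ (fun ω => g (X ω)) b * Real.logb q (pr μ (fun ω => g (X ω)) b) := by
        refine Finset.sum_le_sum fun b _ => ?_
        rw [pr_comp μ X g b, Finset.sum_mul]
        refine Finset.sum_le_sum fun a ha => ?_
        rcases eq_or_lt_of_le (pr_nonneg μ hμ0 X a) with h0 | h0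
        · simp [← h0]
        · refine mul_le_mul_of_nonneg_left ?_ (le_of_lt h0)
          refine Real.logb_le_logb_of_le hq h0 ?_
          exact Finset.single_le_sum (fun a' _ => pr_nonneg μ hμ0 X a') ha

/-- Upper bound on the strong secrecy caching capacity: `H(S) ≤ M - Γ`. -/
theorem stmt1 {Ω A B C : Type*} [Fintype Ω] [Fintype A] [Fintype B] [Fintype C]
    [DecidableEq A] [DecidableEq B] [DecidableEq C]
    (q : ℝ) (hq : 1 < q) (μ : Ω → ℝ) (hμ0 : ∀ ω, 0 ≤ μ ω) (hμ1 : ∑ ω, μ ω = 1)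
    (S : Ω → A) (D : Ω → B) (Y : Ω → C) (M Γ : ℝ)
    (hsec : condEnt q μ S Y = ent q μ S)
    (hrec : condEnt q μ S D = 0)
    (hD : ent q μ D ≤ M)
    (hY : ent q μ Y ≥ Γ)
    (hfun : condEnt q μ Y (fun ω => (D ω, S ω)) = 0) :
    ent q μ S ≤ M - Γ := by
  unfold condEnt at hsec hrec hfun
  have hSY : ent q μ (fun ω => (S ω, Y ω)) = ent q μ S + ent q μ Y := by linarith
  have hSD : ent q μ (fun ω => (S ω, D ω)) = ent q μ D := by linarith
  have hYDS : ent q μ (fun ω => (Y ω, (D ω, S ω))) = ent q μ (fun ω => (D ω, S ω)) := by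
    linarith
  have h1 : ent q μ (fun ω => (S ω, Y ω)) ≤ ent q μ (fun ω => (Y ω, (D ω, S ω))) :=
    ent_comp_le hq hμ0 (fun ω => (Y ω, (D ω, S ω))) (fun p => (p.2.2, p.1))
  have h2 : ent q μ (fun ω => (D ω, S ω)) ≤ ent q μ (fun ω => (S ω, D ω)) :=
    ent_comp_le hq hμ0 (fun ω => (S ω, D ω)) (fun p => (p.2, p.1))
  linarith
end

section
/- In the setting of Theorem 1 (an (n,k)-MDS caching network, t packets per node, node i retaining |P_i| packets and broadcasting r_i packets), if n_h ≤ k (at most k healthy nodes) and the constraint ∑_{i ∉ D} r_i ≥ kt − ∑_{j∈D} |P_j| holds for all k-subsets D, then ∑_{i=1}^n r_i ≥ (n·kt − k·∑_{i=1}^n |P_i|) / (n − k). -/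
open Finset

/-- The `n_h ≤ k` case of Corollary 1: the repair constraints imply
`∑ r_i ≥ (n·kt - k·∑|P_i|)/(n - k)`. -/
theorem stmt13 (n k : ℕ) (hk : 1 ≤ k) (hkn : k < n) (t : ℝ) (r P : Fin n → ℝ)
    (hr : ∀ i, 0 ≤ r i) (hP : ∀ i, 0 ≤ P i ∧ P i ≤ t)
    (hcon : ∀ D : Finset (Fin n), D.card = k →
      (k : ℝ) * t - ∑ j ∈ D, P j ≤ ∑ i ∈ Dᶜ, r i) :
    ∑ i, r i ≥ ((n : ℝ) * ((k : ℝ) * t) - (k : ℝ) * ∑ i, P i) / ((n : ℝ) - (k : ℝ)) := by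
  classical
  set S := Finset.powersetCard k (univ : Finset (Fin n)) with hS
  have hcardS : S.card = Nat.choose n k := by
    simp [hS, Finset.card_powersetCard]
  -- Pascal
  have hpascal : Nat.choose n k = Nat.choose (n-1) (k-1) + Nat.choose (n-1) k := by
    obtain ⟨m, rfl⟩ : ∃ m, n = m+1 := ⟨n-1, by omega⟩
    obtain ⟨l, rfl⟩ : ∃ l, k = l+1 := ⟨k-1, by omega⟩
    simp [Nat.choose_succ_succ, Nat.add_comm]
  -- counting: subsets avoiding j
  have hnotmem : ∀ j : Fin n, (S.filter (fun D => j ∉ D)).card = Nat.choose (n-1) k := by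
    intro j
    have hEq : S.filter (fun D => j ∉ D)
        = Finset.powersetCard k ((univ : Finset (Fin n)).erase j) := by
      ext D
      simp only [hS, Finset.mem_filter, Finset.mem_powersetCard, Finset.subset_erase]
      constructor
      · rintro ⟨⟨h1, h2⟩, h3⟩; exact ⟨⟨h1, h3⟩, h2⟩
      · rintro ⟨⟨h1, h3⟩, h2⟩; exact ⟨⟨h1, h2⟩, h3⟩
    rw [hEq, Finset.card_powersetCard, Finset.card_erase_of_mem (Finset.mem_univ j),
      Finset.card_univ, Fintype.card_fin]
  have hmem : ∀ j : Fin n, (S.filter (fun D => j ∈ D)).card = Nat.choose (n-1) (k-1) := by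
    intro j
    have h1 := Finset.card_filter_add_card_filter_not (s := S) (p := fun D => j ∈ D)
    rw [hcardS] at h1
    have h2 := hnotmem j
    omega
  -- swapping lemma
  have swap : ∀ f : Fin n → ℝ,
      ∑ D ∈ S, ∑ j ∈ D, f j = ((Nat.choose (n-1) (k-1) : ℕ) : ℝ) * ∑ j, f j := by
    intro f
    have h1 : ∀ D ∈ S, ∑ j ∈ D, f j = ∑ j : Fin n, if j ∈ D then f j else 0 := by
      intro D hD
      rw [Finset.sum_ite_mem, Finset.univ_inter]
    rw [Finset.sum_congr rfl h1, Finset.sum_comm]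
    rw [Finset.mul_sum]
    refine Finset.sum_congr rfl fun j _ => ?_
    rw [← Finset.sum_filter, Finset.sum_const, hmem j, nsmul_eq_mul]
  have swapc : ∑ D ∈ S, ∑ i ∈ Dᶜ, r i = ((Nat.choose (n-1) k : ℕ) : ℝ) * ∑ i, r i := by
    have h1 : ∀ D ∈ S, ∑ i ∈ Dᶜ, r i = ∑ i : Fin n, if i ∉ D then r i else 0 := by
      intro D hD
      rw [Finset.sum_ite, Finset.sum_const_zero, add_zero]
      congr 1
      ext i; simp
    rw [Finset.sum_congr rfl h1, Finset.sum_comm]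
    rw [Finset.mul_sum]
    refine Finset.sum_congr rfl fun i _ => ?_
    rw [← Finset.sum_filter, Finset.sum_const, hnotmem i, nsmul_eq_mul]
  -- sum the constraints
  have key : (Nat.choose n k : ℝ) * ((k : ℝ) * t)
      - ((Nat.choose (n-1) (k-1) : ℕ) : ℝ) * ∑ j, P j
      ≤ ((Nat.choose (n-1) k : ℕ) : ℝ) * ∑ i, r i := by
    have hsum : ∑ D ∈ S, ((k : ℝ) * t - ∑ j ∈ D, P j) ≤ ∑ D ∈ S, ∑ i ∈ Dᶜ, r i := by
      refine Finset.sum_le_sum fun D hD => ?_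
      exact hcon D (Finset.mem_powersetCard.1 hD).2
    rw [Finset.sum_sub_distrib, Finset.sum_const, hcardS, swap P, swapc, nsmul_eq_mul] at hsum
    exact hsum
  -- choose identities over ℝ
  set a : ℝ := ((Nat.choose (n-1) k : ℕ) : ℝ) with ha_def
  set b : ℝ := ((Nat.choose (n-1) (k-1) : ℕ) : ℝ) with hb_def
  have ha : 0 < a := by
    rw [ha_def]
    exact_mod_cast Nat.choose_pos (show k ≤ n - 1 by omega)
  have hidB : ((n : ℝ) - (k : ℝ)) * b = (k : ℝ) * a := by
    have h := Nat.choose_succ_right_eq (n-1) (k-1)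
    have hk1 : k - 1 + 1 = k := by omega
    have hnk1 : n - 1 - (k - 1) = n - k := by omega
    rw [hk1, hnk1] at h
    have h' : ((Nat.choose (n-1) k * k : ℕ) : ℝ) = ((Nat.choose (n-1) (k-1) * (n-k) : ℕ) : ℝ) := by
      exact_mod_cast congrArg (Nat.cast : ℕ → ℝ) h
    push_cast at h'
    have hnk : ((n - k : ℕ) : ℝ) = (n : ℝ) - (k : ℝ) := by
      have : k ≤ n := le_of_lt hkn
      push_cast [this]; ring
    rw [hnk] at h'
    rw [ha_def, hb_def]; linarith [h']
  have hidA : ((n : ℝ) - (k : ℝ)) * (Nat.choose n k : ℝ) = (n : ℝ) * a := by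
    have hp : ((Nat.choose n k : ℕ) : ℝ) = b + a := by
      rw [hpascal]; push_cast; ring
    nlinarith [hp, hidB]
  have hnk : (0 : ℝ) < (n : ℝ) - (k : ℝ) := by
    have : (k : ℝ) < (n : ℝ) := by exact_mod_cast hkn
    linarith
  rw [ge_iff_le, div_le_iff₀ hnk]
  have hmul := mul_le_mul_of_nonneg_left key hnk.le
  have e1 : ((n : ℝ) - (k : ℝ)) * ((Nat.choose n k : ℝ) * ((k : ℝ) * t))
      = (n : ℝ) * a * ((k : ℝ) * t) := by linear_combination ((k : ℝ) * t) * hidA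
  have e2 : ((n : ℝ) - (k : ℝ)) * (b * ∑ i, P i) = (k : ℝ) * a * ∑ i, P i := by
    linear_combination (∑ i, P i) * hidB
  have h3 : a * ((n : ℝ) * ((k : ℝ) * t) - (k : ℝ) * ∑ i, P i)
      ≤ a * ((∑ i, r i) * ((n : ℝ) - (k : ℝ))) := by nlinarith [hmul, e1, e2]
  exact le_of_mul_le_mul_left h3 ha
end
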